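/- arXiv:0706.0908 — 3 statements merged into one kernel-verified Lean document; each statement's English description precedes it below -/
import Mathlib

section
/- Let $\phi\in\mathbb{B}^+$ and $\rho>0$ be such that $([0,1],\tau_i,\phi)$ is a $\rho$-weighted system. Then $p(\phi)=\ln\rho$. -/
open MeasureTheory
open scoped NNReal ENNReal

noncomputable section

lemma aux_abs_le {a b g : ℝ} (h1 : a ≤ g) (h2 : g ≤ b) : |g| ≤ |a| + |b| := by
  rw [abs_le]
  constructor
  · nlinarith [neg_abs_le a, abs_nonneg b]
  · nlinarith [le_abs_self b, abs_nonneg a]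

lemma aux_integrable {α : Type*} [MeasurableSpace α] {μ : Measure α} [IsFiniteMeasure μ]
    {g : α → ℝ} (hg : AEStronglyMeasurable g μ) {C : ℝ} (hb : ∀ x, |g x| ≤ C) :
    Integrable g μ :=
  (integrable_const C).mono' hg (Filter.Eventually.of_forall (by simpa [Real.norm_eq_abs] using hb))

lemma aux_ext {μ₁ μ₂ : Measure unitInterval} [IsFiniteMeasure μ₁] [IsFiniteMeasure μ₂]
    (hint : ∀ f : C(unitInterval, ℝ), ∫ x, f x ∂μ₁ = ∫ x, f x ∂μ₂) : μ₁ = μ₂ := by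
  apply ext_of_forall_lintegral_eq_of_IsFiniteMeasure
  intro f
  have hcont : Continuous fun x => ((f x : ℝ≥0) : ℝ) := NNReal.continuous_coe.comp f.continuous
  obtain ⟨C, hC⟩ := f.bounded
  have hbnd : ∀ x, |((f x : ℝ≥0) : ℝ)| ≤ ((f 0 : ℝ≥0) : ℝ) + C := by
    intro x
    have := hC x 0
    rw [NNReal.dist_eq] at this
    have h2 := abs_sub_abs_le_abs_sub ((f x : ℝ≥0) : ℝ) ((f 0 : ℝ≥0) : ℝ)
    have h3 : |((f 0 : ℝ≥0) : ℝ)| = ((f 0 : ℝ≥0) : ℝ) := abs_of_nonneg (NNReal.coe_nonneg _)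
    linarith
  have hbd : ∀ (μ : Measure unitInterval) [IsFiniteMeasure μ],
      ∫⁻ x, (f x : ℝ≥0∞) ∂μ = ENNReal.ofReal (∫ x, ((f x : ℝ≥0) : ℝ) ∂μ) := by
    intro μ hμ
    rw [ofReal_integral_eq_lintegral_ofReal]
    · congr 1 with x
      simp [ENNReal.ofReal_coe_nnreal]
    · exact aux_integrable hcont.measurable.aestronglyMeasurable hbnd
    · exact Filter.Eventually.of_forall fun x => NNReal.coe_nonneg _
  rw [hbd μ₁, hbd μ₂]
  exact congrArg ENNReal.ofReal (hint ⟨_, hcont⟩)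

lemma aux_gibbs {d : ℕ} (p a : Fin d → ℝ) (hp : ∀ i, 0 < p i) (ha : ∀ i, 0 < a i)
    (hs : ∑ i, p i = 1) :
    ∑ i, p i * Real.log (a i / p i) ≤ Real.log (∑ i, a i) := by
  have := (strictConcaveOn_log_Ioi.concaveOn).le_map_sum
    (t := Finset.univ) (w := p) (p := fun i => a i / p i)
    (fun i _ => (hp i).le) hs (fun i _ => div_pos (ha i) (hp i))
  simp only [smul_eq_mul] at this
  have key : ∑ i, p i * (a i / p i) = ∑ i, a i :=
    Finset.sum_congr rfl fun i _ => mul_div_cancel₀ _ (hp i).ne'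
  rw [key] at this
  exact this

/-- `f ∈ 𝔹⁺` : Borel measurable and bounded away from `0` and `∞`. -/
def MemBplus (f : unitInterval → ℝ) : Prop :=
  Measurable f ∧ ∃ c C : ℝ, 0 < c ∧ (∀ x, c ≤ f x) ∧ (∀ x, f x ≤ C)

/-- A probability on `[0,1] × Σ` is holonomic. -/
def IsHolonomic {d : ℕ} (τ : Fin d → unitInterval → unitInterval)
    (ν : Measure (unitInterval × (ℕ → Fin d))) : Prop :=
  ∀ f : C(unitInterval, ℝ), (∫ p, f (τ (p.2 0) p.1) ∂ν) = ∫ p, f p.1 ∂ν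

/-- The transfer (Ruelle) operator `P_φ f (x) = ∑ i, φ(τ_i x) f(τ_i x)`. -/
def transferOp {d : ℕ} (τ : Fin d → unitInterval → unitInterval)
    (φ : unitInterval → ℝ) (f : unitInterval → ℝ) : unitInterval → ℝ :=
  fun x => ∑ i : Fin d, φ (τ i x) * f (τ i x)

lemma aux_meas_pi {d : ℕ} (τ : Fin d → unitInterval → unitInterval)
    (hτ : ∀ i, Continuous (τ i)) :
    Measurable (fun p : unitInterval × (ℕ → Fin d) => τ (p.2 0) p.1) := by
  have h1 : Measurable (fun q : unitInterval × Fin d => τ q.2 q.1) :=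
    measurable_from_prod_countable_left (fun i => (hτ i).measurable)
  exact h1.comp (measurable_fst.prodMk ((measurable_pi_apply 0).comp measurable_snd))

lemma aux_keyB {d : ℕ} (τ : Fin d → unitInterval → unitInterval)
    (hτ : ∀ i, Continuous (τ i)) (φ : unitInterval → ℝ) (hφm : Measurable φ)
    {cφ Cφ : ℝ} (hcφ : 0 < cφ) (hφl : ∀ x, cφ ≤ φ x) (hφu : ∀ x, φ x ≤ Cφ)
    (ρ : ℝ) (hρ : 0 < ρ) (ν : Measure unitInterval) [IsProbabilityMeasure ν]
    (heigm : ∀ f : C(unitInterval, ℝ), (∫ x, transferOp τ φ f x ∂ν) = ρ * ∫ x, f x ∂ν)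
    (g : unitInterval → ℝ) (hgm : Measurable g) (C : ℝ) (hgb : ∀ x, |g x| ≤ C) :
    ∑ i : Fin d, ∫ x, φ (τ i x) * g (τ i x) ∂ν = ρ * ∫ x, g x ∂ν := by
  classical
  have hC0 : 0 ≤ C := le_trans (abs_nonneg _) (hgb ⟨0, by norm_num, by norm_num⟩)
  set D : Fin d → unitInterval → ℝ≥0 := fun i x => (φ (τ i x)).toNNReal with hD
  have hDm : ∀ i, Measurable (D i) :=
    fun i => (hφm.comp (hτ i).measurable).real_toNNReal
  have hfinw : ∀ i, IsFiniteMeasure (ν.withDensity fun x => (D i x : ℝ≥0∞)) := by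
    intro i
    apply isFiniteMeasure_withDensity
    have hle : ∫⁻ x, (D i x : ℝ≥0∞) ∂ν ≤ ∫⁻ _, (Cφ.toNNReal : ℝ≥0∞) ∂ν := by
      apply lintegral_mono
      intro x
      exact ENNReal.coe_le_coe.2 (Real.toNNReal_mono (hφu _))
    refine ne_top_of_le_ne_top ?_ hle
    simp [lintegral_const]
  set M : Fin d → Measure unitInterval :=
    fun i => Measure.map (τ i) (ν.withDensity fun x => (D i x : ℝ≥0∞)) with hM
  have hMfin : ∀ i, IsFiniteMeasure (M i) := by
    intro i
    haveI := hfinw i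
    exact inferInstance
  have hrep : ∀ (u : unitInterval → ℝ), Measurable u → ∀ i,
      ∫ x, u x ∂(M i) = ∫ x, φ (τ i x) * u (τ i x) ∂ν := by
    intro u hu i
    rw [hM]
    rw [integral_map (hτ i).measurable.aemeasurable hu.aestronglyMeasurable,
      integral_withDensity_eq_integral_smul (hDm i)]
    congr 1 with x
    rw [NNReal.smul_def, hD]
    simp only
    rw [Real.coe_toNNReal _ (le_of_lt (lt_of_lt_of_le hcφ (hφl _))), smul_eq_mul]
  have hint_m : ∀ (u : unitInterval → ℝ), Measurable u → ∀ (Cu : ℝ), (∀ x, |u x| ≤ Cu) →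
      ∫ x, u x ∂(∑ i : Fin d, M i) = ∑ i : Fin d, ∫ x, φ (τ i x) * u (τ i x) ∂ν := by
    intro u hu Cu hub
    rw [integral_finset_sum_measure]
    · exact Finset.sum_congr rfl fun i _ => hrep u hu i
    · intro i _
      haveI := hfinw i
      refine (integrable_map_measure hu.aestronglyMeasurable
        (hτ i).measurable.aemeasurable).2 ?_
      exact aux_integrable (hu.comp (hτ i).measurable).aestronglyMeasurable
        (C := Cu) (fun x => hub _)
  haveI hsmulfin : IsFiniteMeasure ((ENNReal.ofReal ρ) • ν) := by
    constructor
    rw [Measure.smul_apply, smul_eq_mul]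
    exact ENNReal.mul_lt_top ENNReal.ofReal_lt_top (measure_lt_top ν _)
  haveI hmfin : IsFiniteMeasure (∑ i : Fin d, M i) := by
    constructor
    rw [Measure.finset_sum_apply]
    refine ENNReal.sum_lt_top.2 fun i _ => ?_
    haveI := hMfin i
    exact measure_lt_top _ _
  have hintble : ∀ (u : unitInterval → ℝ), Measurable u → ∀ (Cu : ℝ), (∀ x, |u x| ≤ Cu) →
      ∀ i : Fin d, Integrable (fun x => φ (τ i x) * u (τ i x)) ν := by
    intro u hu Cu hub i
    refine aux_integrable ((hφm.comp (hτ i).measurable).mul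
      (hu.comp (hτ i).measurable)).aestronglyMeasurable
      (C := (|cφ| + |Cφ|) * Cu) (fun x => ?_)
    rw [abs_mul]
    exact mul_le_mul (aux_abs_le (hφl _) (hφu _)) (hub _) (abs_nonneg _) (by positivity)
  have hm_eq : (∑ i : Fin d, M i) = (ENNReal.ofReal ρ) • ν := by
    apply aux_ext
    intro f
    have hfb : ∀ x, |f x| ≤ ‖f‖ := by
      intro x
      simpa [Real.norm_eq_abs] using f.norm_coe_le_norm x
    rw [hint_m f f.continuous.measurable ‖f‖ hfb, integral_smul_measure,
      ENNReal.toReal_ofReal hρ.le, smul_eq_mul, ← heigm f]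
    rw [show (fun x => transferOp τ φ (⇑f) x) = fun x => ∑ i : Fin d, φ (τ i x) * f (τ i x) from rfl]
    rw [integral_finset_sum]
    intro i _
    exact hintble f f.continuous.measurable ‖f‖ hfb i
  have := hint_m g hgm C hgb
  rw [hm_eq, integral_smul_measure, ENNReal.toReal_ofReal hρ.le, smul_eq_mul] at this
  exact this.symm

lemma aux_nuhat_fin {d : ℕ} (q : Fin d → unitInterval → ℝ) (hqm : ∀ i, Measurable (q i))
    {B : ℝ} (hqB : ∀ i x, q i x ≤ B) (ν : Measure unitInterval) [IsFiniteMeasure ν] (i : Fin d) :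
    IsFiniteMeasure (ν.withDensity fun x => (((q i x).toNNReal : ℝ≥0) : ℝ≥0∞)) := by
  apply isFiniteMeasure_withDensity
  have hle : ∫⁻ x, (((q i x).toNNReal : ℝ≥0) : ℝ≥0∞) ∂ν ≤ ∫⁻ _, (B.toNNReal : ℝ≥0∞) ∂ν :=
    lintegral_mono fun x => ENNReal.coe_le_coe.2 (Real.toNNReal_mono (hqB i x))
  refine ne_top_of_le_ne_top ?_ hle
  rw [lintegral_const]
  exact ENNReal.mul_ne_top ENNReal.coe_ne_top (measure_ne_top ν _)

lemma aux_nuhat_int {d : ℕ} (q : Fin d → unitInterval → ℝ) (hqm : ∀ i, Measurable (q i))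
    {B : ℝ} (hqB : ∀ i x, q i x ≤ B) (hq0 : ∀ i x, 0 ≤ q i x)
    (ν : Measure unitInterval) [IsFiniteMeasure ν]
    (F : unitInterval × (ℕ → Fin d) → ℝ) (hFm : Measurable F) (C : ℝ)
    (hFb : ∀ p, |F p| ≤ C) :
    ∫ p, F p ∂(∑ i : Fin d, Measure.map
        (fun x => ((x, fun _ => i) : unitInterval × (ℕ → Fin d)))
        (ν.withDensity fun x => (((q i x).toNNReal : ℝ≥0) : ℝ≥0∞)))
      = ∑ i : Fin d, ∫ x, q i x * F (x, fun _ => i) ∂ν := by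
  classical
  have hιm : ∀ i : Fin d, Measurable
      (fun x => ((x, fun _ => i) : unitInterval × (ℕ → Fin d))) :=
    fun i => measurable_id.prodMk measurable_const
  rw [integral_finset_sum_measure]
  · refine Finset.sum_congr rfl fun i _ => ?_
    rw [integral_map (hιm i).aemeasurable hFm.aestronglyMeasurable,
      integral_withDensity_eq_integral_smul ((hqm i).real_toNNReal)]
    congr 1 with x
    rw [NNReal.smul_def, Real.coe_toNNReal _ (hq0 i x), smul_eq_mul]
  · intro i _
    haveI := aux_nuhat_fin q hqm hqB ν i
    refine (integrable_map_measure hFm.aestronglyMeasurable (hιm i).aemeasurable).2 ?_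
    exact aux_integrable (hFm.comp (hιm i)).aestronglyMeasurable (C := C) (fun x => hFb _)

lemma aux_nuhat_univ {d : ℕ} (q : Fin d → unitInterval → ℝ) (hqm : ∀ i, Measurable (q i))
    {B : ℝ} (hqB : ∀ i x, q i x ≤ B) (hq0 : ∀ i x, 0 ≤ q i x)
    (ν : Measure unitInterval) [IsFiniteMeasure ν] :
    (∑ i : Fin d, Measure.map
        (fun x => ((x, fun _ => i) : unitInterval × (ℕ → Fin d)))
        (ν.withDensity fun x => (((q i x).toNNReal : ℝ≥0) : ℝ≥0∞))) Set.univ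
      = ENNReal.ofReal (∑ i : Fin d, ∫ x, q i x ∂ν) := by
  classical
  have hιm : ∀ i : Fin d, Measurable
      (fun x => ((x, fun _ => i) : unitInterval × (ℕ → Fin d))) :=
    fun i => measurable_id.prodMk measurable_const
  rw [Measure.finset_sum_apply]
  have h1 : ∀ i : Fin d, (Measure.map
        (fun x => ((x, fun _ => i) : unitInterval × (ℕ → Fin d)))
        (ν.withDensity fun x => (((q i x).toNNReal : ℝ≥0) : ℝ≥0∞))) Set.univ
      = ENNReal.ofReal (∫ x, q i x ∂ν) := by
    intro i
    rw [Measure.map_apply (hιm i) MeasurableSet.univ, Set.preimage_univ,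
      withDensity_apply _ MeasurableSet.univ, setLIntegral_univ,
      ofReal_integral_eq_lintegral_ofReal
        (aux_integrable (hqm i).aestronglyMeasurable (C := |0| + |B|)
          (fun x => aux_abs_le (hq0 i x) (hqB i x)))
        (Filter.Eventually.of_forall (hq0 i))]
    rfl
  rw [Finset.sum_congr rfl fun i _ => h1 i,
    ← ENNReal.ofReal_sum_of_nonneg fun i _ => integral_nonneg (hq0 i)]

/-- The entropy of a holonomic probability. -/
def entropy {d : ℕ} (τ : Fin d → unitInterval → unitInterval)
    (nuhat : Measure (unitInterval × (ℕ → Fin d))) : ℝ :=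
  sInf {r : ℝ | ∃ f : unitInterval → ℝ, MemBplus f ∧
    r = ∫ p, Real.log ((∑ i : Fin d, f (τ i p.1)) / f p.1) ∂nuhat}

/-- The topological pressure `p(φ) = sup {h(ν̂) + ∫ ln φ dν̂ : ν̂ holonomic}`. -/
def pressure {d : ℕ} (τ : Fin d → unitInterval → unitInterval)
    (φ : unitInterval → ℝ) : ℝ :=
  sSup {r : ℝ | ∃ nuhat : Measure (unitInterval × (ℕ → Fin d)),
    IsProbabilityMeasure nuhat ∧ IsHolonomic τ nuhat ∧
    r = entropy τ nuhat + ∫ p, Real.log (φ p.1) ∂nuhat}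

/-- `([0,1], τ_i, φ)` is a `ρ`-weighted system. -/
def IsRhoWeighted {d : ℕ} (τ : Fin d → unitInterval → unitInterval)
    (φ : unitInterval → ℝ) (ρ : ℝ) : Prop :=
  ∃ h : unitInterval → ℝ, MemBplus h ∧ (∀ x, transferOp τ φ h x = ρ * h x) ∧
    ∃ ν : Measure unitInterval, IsProbabilityMeasure ν ∧
      ∀ f : C(unitInterval, ℝ),
        (∫ x, transferOp τ φ f x ∂ν) = ρ * ∫ x, f x ∂ν

lemma aux_holExt {d : ℕ} (τ : Fin d → unitInterval → unitInterval)
    (hτ : ∀ i, Continuous (τ i)) (ν' : Measure (unitInterval × (ℕ → Fin d)))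
    [IsProbabilityMeasure ν'] (hhol : IsHolonomic τ ν')
    (g : unitInterval → ℝ) (hgm : Measurable g) (C : ℝ) (hgb : ∀ x, |g x| ≤ C) :
    ∫ p, g (τ (p.2 0) p.1) ∂ν' = ∫ p, g p.1 ∂ν' := by
  set π : unitInterval × (ℕ → Fin d) → unitInterval := fun p => τ (p.2 0) p.1 with hπ
  have hπm : Measurable π := aux_meas_pi τ hτ
  haveI : IsProbabilityMeasure (Measure.map π ν') := Measure.isProbabilityMeasure_map hπm.aemeasurable
  haveI : IsProbabilityMeasure (Measure.map Prod.fst ν') :=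
    Measure.isProbabilityMeasure_map measurable_fst.aemeasurable
  have hmap : Measure.map π ν' = Measure.map Prod.fst ν' := by
    apply aux_ext
    intro f
    rw [integral_map hπm.aemeasurable f.continuous.measurable.aestronglyMeasurable,
      integral_map measurable_fst.aemeasurable f.continuous.measurable.aestronglyMeasurable]
    exact hhol f
  calc ∫ p, g (π p) ∂ν' = ∫ x, g x ∂(Measure.map π ν') :=
        (integral_map hπm.aemeasurable hgm.aestronglyMeasurable).symm
    _ = ∫ x, g x ∂(Measure.map Prod.fst ν') := by rw [hmap]
    _ = ∫ p, g p.1 ∂ν' := integral_map measurable_fst.aemeasurable hgm.aestronglyMeasurable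

lemma aux_entropy_elem_nonneg {d : ℕ} (hd : 1 ≤ d) (τ : Fin d → unitInterval → unitInterval)
    (hτ : ∀ i, Continuous (τ i)) (ν' : Measure (unitInterval × (ℕ → Fin d)))
    [IsProbabilityMeasure ν'] (hhol : IsHolonomic τ ν')
    (f : unitInterval → ℝ) (hf : MemBplus f) :
    0 ≤ ∫ p, Real.log ((∑ i : Fin d, f (τ i p.1)) / f p.1) ∂ν' := by
  obtain ⟨hfm, cf, Cf, hcf, hfl, hfu⟩ := hf
  have hfpos : ∀ x, 0 < f x := fun x => lt_of_lt_of_le hcf (hfl x)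
  have hCf : 0 < Cf := lt_of_lt_of_le hcf (le_trans (hfl _) (hfu ⟨0, by norm_num, by norm_num⟩))
  have hlogb : ∀ x, |Real.log (f x)| ≤ |Real.log cf| + |Real.log Cf| := fun x =>
    aux_abs_le (Real.log_le_log hcf (hfl x)) (Real.log_le_log (hfpos x) (hfu x))
  have hlogm : Measurable fun x => Real.log (f x) := Real.measurable_log.comp hfm
  have key : ∫ p, (Real.log (f (τ (p.2 0) p.1)) - Real.log (f p.1)) ∂ν' = 0 := by
    rw [integral_sub]
    · rw [aux_holExt τ hτ ν' hhol _ hlogm _ hlogb, sub_self]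
    · exact aux_integrable ((hlogm.comp (aux_meas_pi τ hτ)).comp
        measurable_id).aestronglyMeasurable (C := |Real.log cf| + |Real.log Cf|)
        (fun p => hlogb _)
    · exact aux_integrable (hlogm.comp measurable_fst).aestronglyMeasurable
        (C := |Real.log cf| + |Real.log Cf|) (fun p => hlogb _)
  rw [← key]
  apply integral_mono
  · exact aux_integrable ((hlogm.comp (aux_meas_pi τ hτ)).sub
      (hlogm.comp measurable_fst)).aestronglyMeasurable
      (C := (|Real.log cf| + |Real.log Cf|) + (|Real.log cf| + |Real.log Cf|))
      (fun p => le_trans (abs_sub _ _) (add_le_add (hlogb _) (hlogb _)))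
  · refine aux_integrable ?_ (C := |Real.log (cf / Cf)| + |Real.log (↑d * Cf / cf)|) ?_
    · apply Measurable.aestronglyMeasurable
      apply Real.measurable_log.comp
      apply Measurable.div _ (hfm.comp measurable_fst)
      exact Finset.measurable_sum _ fun i _ => hfm.comp ((hτ i).measurable.comp measurable_fst)
    · intro p
      have i0 : Fin d := ⟨0, hd⟩
      have hsum_lb : cf ≤ ∑ i : Fin d, f (τ i p.1) :=
        le_trans (hfl (τ i0 p.1)) (Finset.single_le_sum
          (fun i _ => (hfpos (τ i p.1)).le) (Finset.mem_univ i0))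
      have hsumpos : 0 < ∑ i : Fin d, f (τ i p.1) := lt_of_lt_of_le hcf hsum_lb
      have hsum_ub : (∑ i : Fin d, f (τ i p.1)) ≤ ↑d * Cf := by
        calc (∑ i : Fin d, f (τ i p.1)) ≤ ∑ _i : Fin d, Cf :=
              Finset.sum_le_sum fun i _ => hfu _
          _ = ↑d * Cf := by
              rw [Finset.sum_const, Finset.card_univ, Fintype.card_fin, nsmul_eq_mul]
      have h1 : cf / Cf ≤ (∑ i : Fin d, f (τ i p.1)) / f p.1 :=
        div_le_div₀ hsumpos.le hsum_lb (hfpos _) (hfu _)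
      have h2 : (∑ i : Fin d, f (τ i p.1)) / f p.1 ≤ ↑d * Cf / cf :=
        div_le_div₀ (by positivity) hsum_ub hcf (hfl _)
      exact aux_abs_le (Real.log_le_log (div_pos hcf hCf) h1)
        (Real.log_le_log (div_pos hsumpos (hfpos _)) h2)
  · intro p
    show Real.log (f (τ (p.2 0) p.1)) - Real.log (f p.1) ≤
      Real.log ((∑ i : Fin d, f (τ i p.1)) / f p.1)
    have i0 : Fin d := ⟨0, hd⟩
    have hsumpos : 0 < ∑ i : Fin d, f (τ i p.1) :=
      lt_of_lt_of_le (hfpos (τ i0 p.1)) (Finset.single_le_sum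
        (fun i _ => (hfpos (τ i p.1)).le) (Finset.mem_univ i0))
    rw [Real.log_div (ne_of_gt hsumpos) (ne_of_gt (hfpos _))]
    apply sub_le_sub_right
    apply Real.log_le_log (hfpos _)
    exact Finset.single_le_sum (f := fun i => f (τ i p.1))
      (fun i _ => (hfpos _).le) (Finset.mem_univ (p.2 0))

lemma aux_L {d : ℕ} (hd : 1 ≤ d) (τ : Fin d → unitInterval → unitInterval)
    (hτ : ∀ i, Continuous (τ i)) {f : unitInterval → ℝ} (hfm : Measurable f)
    {cf Cf : ℝ} (hcf : 0 < cf) (hfl : ∀ x, cf ≤ f x) (hfu : ∀ x, f x ≤ Cf) :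
    Measurable (fun x => Real.log ((∑ i : Fin d, f (τ i x)) / f x)) ∧
    ∀ x, |Real.log ((∑ i : Fin d, f (τ i x)) / f x)|
      ≤ |Real.log (cf / Cf)| + |Real.log (↑d * Cf / cf)| := by
  have hfpos : ∀ x, 0 < f x := fun x => lt_of_lt_of_le hcf (hfl x)
  have hCf : 0 < Cf := lt_of_lt_of_le (hfpos ⟨0, by norm_num, by norm_num⟩)
    (hfu ⟨0, by norm_num, by norm_num⟩)
  constructor
  · apply Real.measurable_log.comp
    exact (Finset.measurable_sum _ fun i _ => hfm.comp (hτ i).measurable).div hfm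
  · intro x
    have i0 : Fin d := ⟨0, hd⟩
    have hsum_lb : cf ≤ ∑ i : Fin d, f (τ i x) :=
      le_trans (hfl (τ i0 x)) (Finset.single_le_sum
        (fun i _ => (hfpos (τ i x)).le) (Finset.mem_univ i0))
    have hsumpos : 0 < ∑ i : Fin d, f (τ i x) := lt_of_lt_of_le hcf hsum_lb
    have hsum_ub : (∑ i : Fin d, f (τ i x)) ≤ ↑d * Cf := by
      calc (∑ i : Fin d, f (τ i x)) ≤ ∑ _i : Fin d, Cf := Finset.sum_le_sum fun i _ => hfu _
        _ = ↑d * Cf := by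
            rw [Finset.sum_const, Finset.card_univ, Fintype.card_fin, nsmul_eq_mul]
    have h1 : cf / Cf ≤ (∑ i : Fin d, f (τ i x)) / f x :=
      div_le_div₀ hsumpos.le hsum_lb (hfpos _) (hfu _)
    have h2 : (∑ i : Fin d, f (τ i x)) / f x ≤ ↑d * Cf / cf :=
      div_le_div₀ (by positivity) hsum_ub hcf (hfl _)
    exact aux_abs_le (Real.log_le_log (div_pos hcf hCf) h1)
      (Real.log_le_log (div_pos hsumpos (hfpos _)) h2)


theorem stmt10 {d : ℕ} (hd : 1 ≤ d) (τ : Fin d → unitInterval → unitInterval)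
    (hτ : ∀ i, Continuous (τ i))
    (φ : unitInterval → ℝ) (hφ : MemBplus φ)
    (ρ : ℝ) (hρ : 0 < ρ) (hw : IsRhoWeighted τ φ ρ) :
    pressure τ φ = Real.log ρ := by
  classical
  obtain ⟨hφm, cφ, Cφ, hcφ, hφl, hφu⟩ := hφ
  obtain ⟨h, ⟨hhm, ch, Ch, hch, hhl, hhu⟩, heig, ν, hνp, heigm⟩ := hw
  haveI := hνp
  have x0 : unitInterval := ⟨0, by norm_num, by norm_num⟩
  have hφpos : ∀ x, 0 < φ x := fun x => lt_of_lt_of_le hcφ (hφl x)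
  have hhpos : ∀ x, 0 < h x := fun x => lt_of_lt_of_le hch (hhl x)
  have hCφ : 0 < Cφ := lt_of_lt_of_le (hφpos x0) (hφu x0)
  have hCh : 0 < Ch := lt_of_lt_of_le (hhpos x0) (hhu x0)
  have keyB := aux_keyB τ hτ φ hφm hcφ hφl hφu ρ hρ ν heigm
  -- integrability helper on ν
  have hIν : ∀ (g : unitInterval → ℝ), Measurable g → ∀ a b : ℝ,
      (∀ x, a ≤ g x) → (∀ x, g x ≤ b) → Integrable g ν := fun g hm a b h1 h2 =>
    aux_integrable hm.aestronglyMeasurable (C := |a| + |b|) (fun x => aux_abs_le (h1 x) (h2 x))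
  have hint_h : Integrable h ν := hIν h hhm ch Ch hhl hhu
  set c := ∫ x, h x ∂ν with hcdef
  have hc : 0 < c := by
    have h1 : ∫ _x, (ch : ℝ) ∂ν ≤ ∫ x, h x ∂ν := integral_mono (integrable_const ch) hint_h hhl
    rw [integral_const] at h1
    simp only [measure_univ, ENNReal.toReal_one, probReal_univ, smul_eq_mul, one_mul] at h1
    exact lt_of_lt_of_le hch h1
  -- the weights
  set q : Fin d → unitInterval → ℝ := fun i x => φ (τ i x) * h (τ i x) / (ρ * c) with hqdef
  have hqm : ∀ i, Measurable (q i) := fun i =>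
    ((hφm.comp (hτ i).measurable).mul (hhm.comp (hτ i).measurable)).div_const _
  have hq0 : ∀ i x, 0 ≤ q i x := fun i x => by
    have := hφpos (τ i x); have := hhpos (τ i x); positivity
  have hqB : ∀ i x, q i x ≤ Cφ * Ch / (ρ * c) := fun i x =>
    div_le_div₀ (by positivity) (mul_le_mul (hφu _) (hhu _) (hhpos _).le hCφ.le)
      (by positivity) le_rfl
  have hpt : ∀ x, ∑ i : Fin d, φ (τ i x) * h (τ i x) = ρ * h x := fun x => heig x
  have hsq : ∀ x, ∑ i : Fin d, q i x = h x / c := by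
    intro x
    rw [hqdef]
    simp only
    rw [← Finset.sum_div, hpt x, mul_div_mul_left _ _ (ne_of_gt hρ)]
  -- the holonomic measure
  set nuh : Measure (unitInterval × (ℕ → Fin d)) := ∑ i : Fin d, Measure.map
      (fun x => ((x, fun _ => i) : unitInterval × (ℕ → Fin d)))
      (ν.withDensity fun x => (((q i x).toNNReal : ℝ≥0) : ℝ≥0∞)) with hnuhdef
  have Hint : ∀ (F : unitInterval × (ℕ → Fin d) → ℝ), Measurable F → ∀ C : ℝ,
      (∀ p, |F p| ≤ C) →
      ∫ p, F p ∂nuh = ∑ i : Fin d, ∫ x, q i x * F (x, fun _ => i) ∂ν :=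
    fun F hFm C hFb => aux_nuhat_int q hqm hqB hq0 ν F hFm C hFb
  have hq_int : ∑ i : Fin d, ∫ x, q i x ∂ν = 1 := by
    have e1 : ∀ i : Fin d, ∫ x, q i x ∂ν = (∫ x, φ (τ i x) * h (τ i x) ∂ν) / (ρ * c) :=
      fun i => integral_div _ _
    rw [Finset.sum_congr rfl fun i _ => e1 i, ← Finset.sum_div,
      keyB h hhm (|ch| + |Ch|) (fun x => aux_abs_le (hhl x) (hhu x))]
    rw [← hcdef]
    field_simp
  have hprob : IsProbabilityMeasure nuh := by
    constructor
    rw [hnuhdef, aux_nuhat_univ q hqm hqB hq0 ν, hq_int, ENNReal.ofReal_one]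
  haveI := hprob
  -- transport lemmas
  have HQ : ∀ (g : unitInterval → ℝ), Measurable g → ∀ C : ℝ, (∀ x, |g x| ≤ C) →
      ∑ i : Fin d, ∫ x, q i x * g (τ i x) ∂ν = c⁻¹ * ∫ x, h x * g x ∂ν := by
    intro g hgm C hgb
    have hC0 : 0 ≤ C := le_trans (abs_nonneg _) (hgb x0)
    have e1 : ∀ i : Fin d, ∫ x, q i x * g (τ i x) ∂ν
        = (ρ * c)⁻¹ * ∫ x, φ (τ i x) * (h (τ i x) * g (τ i x)) ∂ν := by
      intro i
      rw [← integral_const_mul]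
      apply integral_congr_ae
      apply Filter.Eventually.of_forall
      intro x
      simp only [hqdef]
      field_simp
    have e2 := keyB (fun x => h x * g x) (hhm.mul hgm) ((|ch| + |Ch|) * C) (fun x => by
      rw [abs_mul]
      exact mul_le_mul (aux_abs_le (hhl x) (hhu x)) (hgb x) (abs_nonneg _) (by positivity))
    rw [Finset.sum_congr rfl fun i _ => e1 i, ← Finset.mul_sum, e2]
    field_simp
  have Hfst : ∀ (g : unitInterval → ℝ), Measurable g → ∀ C : ℝ, (∀ x, |g x| ≤ C) →
      ∫ p, g p.1 ∂nuh = c⁻¹ * ∫ x, h x * g x ∂ν := by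
    intro g hgm C hgb
    have hC0 : 0 ≤ C := le_trans (abs_nonneg _) (hgb x0)
    rw [Hint (fun p => g p.1) (hgm.comp measurable_fst) C (fun p => hgb _)]
    have hib : ∀ i ∈ Finset.univ, Integrable (fun x => q i x * g x) ν := fun i _ =>
      aux_integrable ((hqm i).mul hgm).aestronglyMeasurable
        (C := (Cφ * Ch / (ρ * c)) * C) (fun x => by
          rw [abs_mul, abs_of_nonneg (hq0 i x)]
          exact mul_le_mul (hqB i x) (hgb x) (abs_nonneg _) (by positivity))
    rw [← integral_finset_sum _ hib, ← integral_const_mul]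
    apply integral_congr_ae
    apply Filter.Eventually.of_forall
    intro x
    simp only
    rw [← Finset.sum_mul, hsq x]
    ring
  have Hpush : ∀ (g : unitInterval → ℝ), Measurable g → ∀ C : ℝ, (∀ x, |g x| ≤ C) →
      ∫ p, g (τ (p.2 0) p.1) ∂nuh = c⁻¹ * ∫ x, h x * g x ∂ν := by
    intro g hgm C hgb
    rw [Hint (fun p => g (τ (p.2 0) p.1)) (hgm.comp (aux_meas_pi τ hτ)) C (fun p => hgb _)]
    exact HQ g hgm C hgb
  have hholo : IsHolonomic τ nuh := by
    intro f
    have hfb : ∀ x, |f x| ≤ ‖f‖ := fun x => by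
      simpa [Real.norm_eq_abs] using f.norm_coe_le_norm x
    rw [Hpush f f.continuous.measurable ‖f‖ hfb, Hfst f f.continuous.measurable ‖f‖ hfb]
  -- pointwise identity for the canonical test function f₀ = φ * h
  have hlogφb : ∀ x, |Real.log (φ x)| ≤ |Real.log cφ| + |Real.log Cφ| := fun x =>
    aux_abs_le (Real.log_le_log hcφ (hφl x)) (Real.log_le_log (hφpos x) (hφu x))
  have hlogφm : Measurable fun x => Real.log (φ x) := Real.measurable_log.comp hφm
  have hptlog : ∀ x : unitInterval,
      Real.log ((∑ i : Fin d, φ (τ i x) * h (τ i x)) / (φ x * h x))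
        = Real.log ρ - Real.log (φ x) := by
    intro x
    rw [hpt x, mul_div_mul_right _ _ (ne_of_gt (hhpos x)),
      Real.log_div (ne_of_gt hρ) (ne_of_gt (hφpos x))]
  have hf₀B : MemBplus (fun x => φ x * h x) := by
    refine ⟨hφm.mul hhm, cφ * ch, Cφ * Ch, by positivity, fun x => ?_, fun x => ?_⟩
    · exact mul_le_mul (hφl x) (hhl x) hch.le (hφpos x).le
    · exact mul_le_mul (hφu x) (hhu x) (hhpos x).le hCφ.le
  set Iφ : ℝ := ∫ p, Real.log (φ p.1) ∂nuh with hIφdef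
  -- entropy of nuh
  have hr₀ : ∀ (m : Measure (unitInterval × (ℕ → Fin d))), IsProbabilityMeasure m →
      (∫ p, Real.log ((∑ i : Fin d, (fun x => φ x * h x) (τ i p.1)) / ((fun x => φ x * h x) p.1)) ∂m)
        = Real.log ρ - ∫ p, Real.log (φ p.1) ∂m := by
    intro m hm
    haveI := hm
    have e1 : ∀ p : unitInterval × (ℕ → Fin d),
        Real.log ((∑ i : Fin d, φ (τ i p.1) * h (τ i p.1)) / (φ p.1 * h p.1))
          = Real.log ρ - Real.log (φ p.1) := fun p => hptlog p.1
    have hInt2 : Integrable (fun p : unitInterval × (ℕ → Fin d) => Real.log (φ p.1)) m :=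
      aux_integrable (hlogφm.comp measurable_fst).aestronglyMeasurable
        (C := |Real.log cφ| + |Real.log Cφ|) (fun p => hlogφb _)
    rw [integral_congr_ae (Filter.Eventually.of_forall e1),
      integral_sub (integrable_const _) hInt2, integral_const]
    simp
  have hIφc : Iφ = c⁻¹ * ∫ x, h x * Real.log (φ x) ∂ν := by
    rw [hIφdef]
    exact Hfst (fun x => Real.log (φ x)) hlogφm _ hlogφb
  have hent : entropy τ nuh = Real.log ρ - Iφ := by
    have hmem₀ : (Real.log ρ - Iφ) ∈ {r : ℝ | ∃ f : unitInterval → ℝ, MemBplus f ∧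
        r = ∫ p, Real.log ((∑ i : Fin d, f (τ i p.1)) / f p.1) ∂nuh} :=
      ⟨fun x => φ x * h x, hf₀B, (hr₀ nuh hprob).symm⟩
    have hlow : ∀ r ∈ {r : ℝ | ∃ f : unitInterval → ℝ, MemBplus f ∧
        r = ∫ p, Real.log ((∑ i : Fin d, f (τ i p.1)) / f p.1) ∂nuh},
        Real.log ρ - Iφ ≤ r := by
      rintro r ⟨f, ⟨hfm, cf, Cf, hcf, hfl, hfu⟩, rfl⟩
      have hfpos : ∀ x, 0 < f x := fun x => lt_of_lt_of_le hcf (hfl x)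
      have hCf : 0 < Cf := lt_of_lt_of_le (hfpos x0) (hfu x0)
      obtain ⟨hLm, hLb⟩ := aux_L hd τ hτ hfm hcf hfl hfu
      have hlogfb : ∀ x, |Real.log (f x)| ≤ |Real.log cf| + |Real.log Cf| := fun x =>
        aux_abs_le (Real.log_le_log hcf (hfl x)) (Real.log_le_log (hfpos x) (hfu x))
      have hloghb : ∀ x, |Real.log (h x)| ≤ |Real.log ch| + |Real.log Ch| := fun x =>
        aux_abs_le (Real.log_le_log hch (hhl x)) (Real.log_le_log (hhpos x) (hhu x))
      have hggm : Measurable (fun y => Real.log (f y) - Real.log (φ y) - Real.log (h y)) :=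
        ((Real.measurable_log.comp hfm).sub hlogφm).sub (Real.measurable_log.comp hhm)
      have hggb : ∀ y, |Real.log (f y) - Real.log (φ y) - Real.log (h y)|
          ≤ (|Real.log cf| + |Real.log Cf|) + (|Real.log cφ| + |Real.log Cφ|)
            + (|Real.log ch| + |Real.log Ch|) := by
        intro y
        calc |Real.log (f y) - Real.log (φ y) - Real.log (h y)|
            ≤ |Real.log (f y) - Real.log (φ y)| + |Real.log (h y)| := abs_sub _ _
          _ ≤ (|Real.log (f y)| + |Real.log (φ y)|) + |Real.log (h y)| :=
              add_le_add_left (abs_sub _ _) _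
          _ ≤ _ := add_le_add (add_le_add (hlogfb y) (hlogφb y)) (hloghb y)
      -- integrability facts
      have hterm_int : ∀ j : Fin d, Integrable (fun x => q j x *
          (Real.log (f (τ j x)) - Real.log (φ (τ j x)) - Real.log (h (τ j x)))) ν := by
        intro j
        refine aux_integrable ((hqm j).mul (hggm.comp (hτ j).measurable)).aestronglyMeasurable
          (C := (Cφ * Ch / (ρ * c)) * ((|Real.log cf| + |Real.log Cf|)
            + (|Real.log cφ| + |Real.log Cφ|) + (|Real.log ch| + |Real.log Ch|)))
          (fun x => ?_)
        rw [abs_mul, abs_of_nonneg (hq0 j x)]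
        exact mul_le_mul (hqB j x) (hggb _) (abs_nonneg _) (by positivity)
      have hrest_m : Measurable (fun x => h x *
          (Real.log ρ + Real.log (h x) - Real.log (f x))) :=
        hhm.mul ((measurable_const.add (Real.measurable_log.comp hhm)).sub
          (Real.measurable_log.comp hfm))
      have hrest_b : ∀ x, |h x * (Real.log ρ + Real.log (h x) - Real.log (f x))|
          ≤ (|ch| + |Ch|) * (|Real.log ρ| + (|Real.log ch| + |Real.log Ch|)
            + (|Real.log cf| + |Real.log Cf|)) := by
        intro x
        rw [abs_mul]
        refine mul_le_mul (aux_abs_le (hhl x) (hhu x)) ?_ (abs_nonneg _) (by positivity)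
        calc |Real.log ρ + Real.log (h x) - Real.log (f x)|
            ≤ |Real.log ρ + Real.log (h x)| + |Real.log (f x)| := abs_sub _ _
          _ ≤ (|Real.log ρ| + |Real.log (h x)|) + |Real.log (f x)| :=
              add_le_add_left (abs_add_le _ _) _
          _ ≤ _ := add_le_add (add_le_add le_rfl (hloghb x)) (hlogfb x)
      have hrest_int : Integrable (fun x => h x *
          (Real.log ρ + Real.log (h x) - Real.log (f x))) ν :=
        aux_integrable hrest_m.aestronglyMeasurable hrest_b
      have hW_int : Integrable (fun x => c * (∑ j : Fin d, q j x *
          (Real.log (f (τ j x)) - Real.log (φ (τ j x)) - Real.log (h (τ j x))))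
          + h x * (Real.log ρ + Real.log (h x) - Real.log (f x))) ν :=
        ((integrable_finset_sum Finset.univ (fun j _ => hterm_int j)).const_mul c).add hrest_int
      have hhL_int : Integrable (fun x => h x *
          Real.log ((∑ i : Fin d, f (τ i x)) / f x)) ν := by
        refine aux_integrable (hhm.mul hLm).aestronglyMeasurable
          (C := (|ch| + |Ch|) * (|Real.log (cf / Cf)| + |Real.log (↑d * Cf / cf)|))
          (fun x => ?_)
        rw [abs_mul]
        exact mul_le_mul (aux_abs_le (hhl x) (hhu x)) (hLb x) (abs_nonneg _) (by positivity)
      have hgg_int : Integrable (fun x => h x *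
          (Real.log (f x) - Real.log (φ x) - Real.log (h x))) ν := by
        refine aux_integrable (hhm.mul hggm).aestronglyMeasurable
          (C := (|ch| + |Ch|) * ((|Real.log cf| + |Real.log Cf|)
            + (|Real.log cφ| + |Real.log Cφ|) + (|Real.log ch| + |Real.log Ch|)))
          (fun x => ?_)
        rw [abs_mul]
        exact mul_le_mul (aux_abs_le (hhl x) (hhu x)) (hggb x) (abs_nonneg _) (by positivity)
      have hhlogφ_int : Integrable (fun x => h x * Real.log (φ x)) ν :=
        aux_integrable (hhm.mul hlogφm).aestronglyMeasurable
          (C := (|ch| + |Ch|) * (|Real.log cφ| + |Real.log Cφ|))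
          (fun x => by
            rw [abs_mul]
            exact mul_le_mul (aux_abs_le (hhl x) (hhu x)) (hlogφb x) (abs_nonneg _)
              (by positivity))
      -- pointwise Gibbs inequality
      have hWL : ∀ x, c * (∑ j : Fin d, q j x *
          (Real.log (f (τ j x)) - Real.log (φ (τ j x)) - Real.log (h (τ j x))))
          + h x * (Real.log ρ + Real.log (h x) - Real.log (f x))
          ≤ h x * Real.log ((∑ i : Fin d, f (τ i x)) / f x) := by
        intro x
        have hPpos : ∀ j : Fin d, 0 < φ (τ j x) * h (τ j x) / (ρ * h x) := fun j => by
          have := hφpos (τ j x); have := hhpos (τ j x); have := hhpos x; positivity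
        have hPsum : ∑ j : Fin d, φ (τ j x) * h (τ j x) / (ρ * h x) = 1 := by
          rw [← Finset.sum_div, hpt x, div_self (ne_of_gt (mul_pos hρ (hhpos x)))]
        have i0 : Fin d := ⟨0, hd⟩
        have hsumfpos : 0 < ∑ i : Fin d, f (τ i x) :=
          lt_of_lt_of_le (hfpos (τ i0 x)) (Finset.single_le_sum
            (fun i _ => (hfpos (τ i x)).le) (Finset.mem_univ i0))
        have hG := aux_gibbs (fun j => φ (τ j x) * h (τ j x) / (ρ * h x))
          (fun j => f (τ j x)) hPpos (fun j => hfpos _) hPsum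
        have hterm : ∀ j : Fin d, Real.log (f (τ j x) / (φ (τ j x) * h (τ j x) / (ρ * h x)))
            = (Real.log (f (τ j x)) - Real.log (φ (τ j x)) - Real.log (h (τ j x)))
              + (Real.log ρ + Real.log (h x)) := by
          intro j
          rw [Real.log_div (hfpos _).ne' (hPpos j).ne',
            Real.log_div (mul_pos (hφpos _) (hhpos _)).ne' (mul_pos hρ (hhpos x)).ne',
            Real.log_mul (hφpos _).ne' (hhpos _).ne',
            Real.log_mul hρ.ne' (hhpos x).ne']
          ring
        rw [Finset.sum_congr rfl (fun j _ => by rw [hterm j])] at hG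
        have hsplit : ∑ j : Fin d, (φ (τ j x) * h (τ j x) / (ρ * h x)) *
            ((Real.log (f (τ j x)) - Real.log (φ (τ j x)) - Real.log (h (τ j x)))
              + (Real.log ρ + Real.log (h x)))
            = (∑ j : Fin d, (φ (τ j x) * h (τ j x) / (ρ * h x)) *
              (Real.log (f (τ j x)) - Real.log (φ (τ j x)) - Real.log (h (τ j x))))
              + (Real.log ρ + Real.log (h x)) := by
          rw [Finset.sum_congr rfl (fun j _ => mul_add _ _ _), Finset.sum_add_distrib,
            ← Finset.sum_mul, hPsum, one_mul]
        rw [hsplit] at hG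
        have hkey := mul_le_mul_of_nonneg_left hG (hhpos x).le
        have hcq : ∀ j : Fin d, c * (q j x *
            (Real.log (f (τ j x)) - Real.log (φ (τ j x)) - Real.log (h (τ j x))))
            = h x * ((φ (τ j x) * h (τ j x) / (ρ * h x)) *
              (Real.log (f (τ j x)) - Real.log (φ (τ j x)) - Real.log (h (τ j x)))) := by
          intro j
          simp only [hqdef]
          have h1 : h x ≠ 0 := (hhpos x).ne'
          have h2 : ρ ≠ 0 := hρ.ne'
          have h3 : c ≠ 0 := hc.ne'
          field_simp
        have hmulsum : c * (∑ j : Fin d, q j x *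
            (Real.log (f (τ j x)) - Real.log (φ (τ j x)) - Real.log (h (τ j x))))
            = h x * ∑ j : Fin d, (φ (τ j x) * h (τ j x) / (ρ * h x)) *
              (Real.log (f (τ j x)) - Real.log (φ (τ j x)) - Real.log (h (τ j x))) := by
          rw [Finset.mul_sum, Finset.mul_sum]
          exact Finset.sum_congr rfl fun j _ => hcq j
        rw [Real.log_div hsumfpos.ne' (hfpos x).ne']
        rw [mul_add] at hkey
        nlinarith [hkey, hmulsum]
      -- put it together
      have e_r : ∫ p, Real.log ((∑ i : Fin d, f (τ i p.1)) / f p.1) ∂nuh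
          = c⁻¹ * ∫ x, h x * Real.log ((∑ i : Fin d, f (τ i x)) / f x) ∂ν :=
        Hfst (fun x => Real.log ((∑ i : Fin d, f (τ i x)) / f x)) hLm _ hLb
      have e_mono : (∫ x, (c * (∑ j : Fin d, q j x *
          (Real.log (f (τ j x)) - Real.log (φ (τ j x)) - Real.log (h (τ j x))))
          + h x * (Real.log ρ + Real.log (h x) - Real.log (f x))) ∂ν)
          ≤ ∫ x, h x * Real.log ((∑ i : Fin d, f (τ i x)) / f x) ∂ν :=
        integral_mono hW_int hhL_int hWL
      have e_W : (∫ x, (c * (∑ j : Fin d, q j x *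
          (Real.log (f (τ j x)) - Real.log (φ (τ j x)) - Real.log (h (τ j x))))
          + h x * (Real.log ρ + Real.log (h x) - Real.log (f x))) ∂ν)
          = Real.log ρ * c - ∫ x, h x * Real.log (φ x) ∂ν := by
        rw [integral_add ((integrable_finset_sum Finset.univ
            (fun j _ => hterm_int j)).const_mul c) hrest_int,
          integral_const_mul, integral_finset_sum Finset.univ (fun j _ => hterm_int j),
          HQ (fun y => Real.log (f y) - Real.log (φ y) - Real.log (h y)) hggm _ hggb,
          ← mul_assoc, mul_inv_cancel₀ (ne_of_gt hc), one_mul,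
          ← integral_add hgg_int hrest_int]
        have e1 : ∀ x : unitInterval, (h x * (Real.log (f x) - Real.log (φ x) - Real.log (h x))
            + h x * (Real.log ρ + Real.log (h x) - Real.log (f x)))
            = Real.log ρ * h x - h x * Real.log (φ x) := fun x => by ring
        rw [integral_congr_ae (Filter.Eventually.of_forall e1),
          integral_sub (hint_h.const_mul _) hhlogφ_int, integral_const_mul, ← hcdef]
      calc Real.log ρ - Iφ
          = c⁻¹ * (Real.log ρ * c - ∫ x, h x * Real.log (φ x) ∂ν) := by
            rw [hIφc]
            field_simp
          _ = c⁻¹ * ∫ x, (c * (∑ j : Fin d, q j x *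
              (Real.log (f (τ j x)) - Real.log (φ (τ j x)) - Real.log (h (τ j x))))
              + h x * (Real.log ρ + Real.log (h x) - Real.log (f x))) ∂ν := by rw [e_W]
          _ ≤ c⁻¹ * ∫ x, h x * Real.log ((∑ i : Fin d, f (τ i x)) / f x) ∂ν :=
            mul_le_mul_of_nonneg_left e_mono (inv_nonneg.2 hc.le)
          _ = ∫ p, Real.log ((∑ i : Fin d, f (τ i p.1)) / f p.1) ∂nuh := e_r.symm
    exact le_antisymm (csInf_le ⟨_, hlow⟩ hmem₀) (le_csInf ⟨_, hmem₀⟩ hlow)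
  -- membership: log ρ is attained
  have hmem : Real.log ρ ∈ {r : ℝ | ∃ nuhat : Measure (unitInterval × (ℕ → Fin d)),
      IsProbabilityMeasure nuhat ∧ IsHolonomic τ nuhat ∧
      r = entropy τ nuhat + ∫ p, Real.log (φ p.1) ∂nuhat} := by
    exact ⟨nuh, hprob, hholo, by rw [hent, ← hIφdef]; ring⟩
  -- upper bound
  have hub : ∀ r ∈ {r : ℝ | ∃ nuhat : Measure (unitInterval × (ℕ → Fin d)),
      IsProbabilityMeasure nuhat ∧ IsHolonomic τ nuhat ∧
      r = entropy τ nuhat + ∫ p, Real.log (φ p.1) ∂nuhat}, r ≤ Real.log ρ := by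
    rintro r ⟨m, hm, hmhol, rfl⟩
    haveI := hm
    have hbdd : BddBelow {r : ℝ | ∃ f : unitInterval → ℝ, MemBplus f ∧
        r = ∫ p, Real.log ((∑ i : Fin d, f (τ i p.1)) / f p.1) ∂m} := by
      refine ⟨0, fun r hr => ?_⟩
      obtain ⟨f, hf, rfl⟩ := hr
      exact aux_entropy_elem_nonneg hd τ hτ m hmhol f hf
    have hle : entropy τ m ≤ Real.log ρ - ∫ p, Real.log (φ p.1) ∂m := by
      rw [← hr₀ m hm]
      exact csInf_le hbdd ⟨fun x => φ x * h x, hf₀B, rfl⟩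
    linarith
  rw [pressure]
  exact le_antisymm (csSup_le ⟨_, hmem⟩ hub) (le_csSup ⟨Real.log ρ, hub⟩ hmem)
end
end

section
/- Let $\phi\in\mathbb{B}^+$, $\rho>0$ and $h\in\mathbb{B}^+$ satisfy $P_\phi h=\rho h$ pointwise, and define the normalized weights $u_i(x)=\phi(\tau_i(x))h(\tau_i(x))/(\rho h(x))$ for $i=0,\dots,d-1$. Let $\hat{\nu}_0$ be a holonomic probability on $[0,1]\times\Sigma$ whose projection $\nu_0=\pi_*\hat{\nu}_0$ to $[0,1]$ (where $\pi(x,w)=x$) satisfies $\int\sum_{i=0}^{d-1}u_i(x)f(\tau_i(x))\,d\nu_0(x)=\int f\,d\nu_0$ for every continuous $f:[0,1]\to\mathbb{R}$. Then $\hat{\nu}_0$ is an equilibrium state for $\phi$: $h(\hat{\nu}_0)+\int\ln\phi\,d\hat{\nu}_0=\ln\rho$. -/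
open MeasureTheory
open scoped NNReal ENNReal

noncomputable section

/-- A bounded measurable real function is integrable w.r.t. a finite measure. -/
lemma integrable_of_bdd {X : Type*} [MeasurableSpace X] {μ : Measure X} [IsFiniteMeasure μ]
    {f : X → ℝ} (hm : Measurable f) {M : ℝ} (hb : ∀ x, |f x| ≤ M) : Integrable f μ :=
  ⟨hm.aestronglyMeasurable,
    HasFiniteIntegral.of_bounded (C := M)
      (Filter.Eventually.of_forall (by simpa [Real.norm_eq_abs] using hb))⟩

/-- A bound on `|log y|` for `y` in a positive interval. -/
lemma abs_log_le {c C y : ℝ} (hc : 0 < c) (h1 : c ≤ y) (h2 : y ≤ C) :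
    |Real.log y| ≤ max |Real.log c| |Real.log C| := by
  have hy : 0 < y := lt_of_lt_of_le hc h1
  rcases abs_cases (Real.log y) with ⟨he, _⟩ | ⟨he, _⟩
  · rw [he]
    calc Real.log y ≤ Real.log C := Real.log_le_log hy h2
      _ ≤ |Real.log C| := le_abs_self _
      _ ≤ _ := le_max_right _ _
  · rw [he]
    calc -Real.log y ≤ -Real.log c := by
          have := Real.log_le_log hc h1; linarith
      _ ≤ |Real.log c| := (neg_le_abs _)
      _ ≤ _ := le_max_left _ _

/-- Gibbs' inequality. -/
lemma gibbs {d : ℕ} (u a : Fin d → ℝ) (hu : ∀ i, 0 < u i) (husum : ∑ i, u i = 1)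
    (ha : ∀ i, 0 < a i) :
    ∑ i, u i * Real.log (a i / u i) ≤ Real.log (∑ i, a i) := by
  have hne : (Finset.univ : Finset (Fin d)).Nonempty := by
    by_contra hc
    rw [Finset.not_nonempty_iff_eq_empty] at hc
    rw [hc, Finset.sum_empty] at husum
    norm_num at husum
  have hS : (0:ℝ) < ∑ i, a i := Finset.sum_pos (fun i _ => ha i) hne
  have key : ∀ i : Fin d,
      u i * Real.log (a i / u i) - u i * Real.log (∑ j, a j) ≤ a i / (∑ j, a j) - u i := by
    intro i
    have h1 : Real.log (a i / u i) - Real.log (∑ j, a j)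
        = Real.log (a i / (u i * (∑ j, a j))) := by
      rw [Real.log_div (ha i).ne' (hu i).ne',
        Real.log_div (ha i).ne' (mul_pos (hu i) hS).ne',
        Real.log_mul (hu i).ne' hS.ne']
      ring
    have h2 : Real.log (a i / (u i * (∑ j, a j))) ≤ a i / (u i * (∑ j, a j)) - 1 :=
      Real.log_le_sub_one_of_pos (div_pos (ha i) (mul_pos (hu i) hS))
    calc u i * Real.log (a i / u i) - u i * Real.log (∑ j, a j)
        = u i * (Real.log (a i / u i) - Real.log (∑ j, a j)) := by ring
      _ = u i * Real.log (a i / (u i * (∑ j, a j))) := by rw [h1]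
      _ ≤ u i * (a i / (u i * (∑ j, a j)) - 1) :=
          mul_le_mul_of_nonneg_left h2 (hu i).le
      _ = u i * (a i / (u i * (∑ j, a j))) - u i := by ring
      _ = a i / (∑ j, a j) - u i := by
          rw [mul_div_assoc', mul_div_mul_left _ _ (hu i).ne']
  have hsum := Finset.sum_le_sum (s := Finset.univ) (fun i _ => key i)
  have e1 : ∑ i, (u i * Real.log (a i / u i) - u i * Real.log (∑ j, a j))
      = (∑ i, u i * Real.log (a i / u i)) - Real.log (∑ j, a j) := by
    rw [Finset.sum_sub_distrib, ← Finset.sum_mul, husum, one_mul]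
  have e2 : ∑ i, (a i / (∑ j, a j) - u i) = 0 := by
    rw [Finset.sum_sub_distrib, ← Finset.sum_div, div_self hS.ne', husum, sub_self]
  rw [e1, e2] at hsum
  linarith

theorem stmt12 {d : ℕ} (hd : 1 ≤ d) (τ : Fin d → unitInterval → unitInterval)
    (hτ : ∀ i, Continuous (τ i))
    (φ : unitInterval → ℝ) (hφ : MemBplus φ)
    (ρ : ℝ) (hρ : 0 < ρ) (h : unitInterval → ℝ) (hh : MemBplus h)
    (heig : ∀ x, (∑ i : Fin d, φ (τ i x) * h (τ i x)) = ρ * h x)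
    (u : Fin d → unitInterval → ℝ)
    (hu : ∀ i x, u i x = φ (τ i x) * h (τ i x) / (ρ * h x))
    (nuhat₀ : Measure (unitInterval × (ℕ → Fin d))) [IsProbabilityMeasure nuhat₀]
    (hhol : IsHolonomic τ nuhat₀)
    (hproj : ∀ f : C(unitInterval, ℝ),
      (∫ x, ∑ i : Fin d, u i x * f (τ i x) ∂(Measure.map Prod.fst nuhat₀))
        = ∫ x, f x ∂(Measure.map Prod.fst nuhat₀)) :
    entropy τ nuhat₀ + (∫ p, Real.log (φ p.1) ∂nuhat₀) = Real.log ρ := by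
  obtain ⟨hφm, cφ, Cφ, hcφ, hφlb, hφub⟩ := hφ
  obtain ⟨hhm, ch, Ch, hch, hhlb, hhub⟩ := hh
  set ν : Measure unitInterval := Measure.map Prod.fst nuhat₀ with hνdef
  haveI hνP : IsProbabilityMeasure ν := Measure.isProbabilityMeasure_map measurable_fst.aemeasurable
  have hφpos : ∀ x, 0 < φ x := fun x => lt_of_lt_of_le hcφ (hφlb x)
  have hhpos : ∀ x, 0 < h x := fun x => lt_of_lt_of_le hch (hhlb x)
  have hρh : ∀ x, 0 < ρ * h x := fun x => mul_pos hρ (hhpos x)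
  have hupos : ∀ i x, 0 < u i x := by
    intro i x; rw [hu]
    exact div_pos (mul_pos (hφpos _) (hhpos _)) (hρh x)
  have husum : ∀ x, ∑ i, u i x = 1 := by
    intro x
    have e1 : ∑ i, u i x = (∑ i, φ (τ i x) * h (τ i x)) / (ρ * h x) := by
      rw [Finset.sum_div]; exact Finset.sum_congr rfl fun i _ => hu i x
    rw [e1, heig, div_self (hρh x).ne']
  have huub : ∀ i x, u i x ≤ 1 := by
    intro i x
    calc u i x ≤ ∑ j, u j x :=
          Finset.single_le_sum (f := fun j => u j x) (fun j _ => (hupos j x).le)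
            (Finset.mem_univ i)
      _ = 1 := husum x
  have hum : ∀ i, Measurable (u i) := by
    intro i
    have : u i = fun x => φ (τ i x) * h (τ i x) / (ρ * h x) := funext (hu i)
    rw [this]
    exact ((hφm.comp (hτ i).measurable).mul (hhm.comp (hτ i).measurable)).div
      (measurable_const.mul hhm)
  -- the component measures
  set κ : Fin d → Measure unitInterval := fun i =>
    (ν.withDensity (fun x => ((u i x).toNNReal : ENNReal))).map (τ i) with hκdef
  have hκfin : ∀ i, IsFiniteMeasure (κ i) := by
    intro i
    have : IsFiniteMeasure (ν.withDensity (fun x => ((u i x).toNNReal : ENNReal))) := by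
      apply isFiniteMeasure_withDensity
      have hb : ∫⁻ x, ((u i x).toNNReal : ENNReal) ∂ν ≤ ∫⁻ _, 1 ∂ν := by
        apply lintegral_mono
        intro x
        simpa using ENNReal.coe_le_coe.mpr (Real.toNNReal_le_one.mpr (huub i x))
      refine ne_of_lt (lt_of_le_of_lt hb ?_)
      simp
    infer_instance
  have hκint : ∀ (i : Fin d) (g : unitInterval → ℝ), Measurable g →
      ∫ y, g y ∂(κ i) = ∫ x, u i x * g (τ i x) ∂ν := by
    intro i g hg
    rw [hκdef]
    rw [integral_map (hτ i).measurable.aemeasurable hg.aestronglyMeasurable]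
    rw [integral_withDensity_eq_integral_smul ((hum i).real_toNNReal)]
    congr 1
    funext x
    simp [NNReal.smul_def, Real.coe_toNNReal _ (hupos i x).le]
  haveI hκsumfin : IsFiniteMeasure (∑ i, κ i) := by
    constructor
    rw [Measure.finset_sum_apply]
    have := hκfin
    exact ENNReal.sum_lt_top.mpr (fun i _ => measure_lt_top _ _)
  -- the measure identity
  have hmeq : (∑ i, κ i) = ν := by
    apply ext_of_forall_lintegral_eq_of_IsFiniteMeasure
    intro f
    have hcont : Continuous fun x => (f x : ℝ) := NNReal.continuous_coe.comp f.continuous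
    have hB : ∫ y, (f y : ℝ) ∂(∑ i, κ i) = ∫ y, (f y : ℝ) ∂ν := by
      have hint : ∀ i ∈ Finset.univ, Integrable (fun y => (f y : ℝ)) (κ i) := by
        intro i _
        have := hκfin i
        refine integrable_of_bdd hcont.measurable (M := ((nndist f 0 : ℝ≥0) : ℝ))
          (fun x => ?_)
        rw [abs_of_nonneg (f x).coe_nonneg]
        exact_mod_cast BoundedContinuousFunction.NNReal.upper_bound f x
      rw [integral_finset_sum_measure hint]
      have e2 : ∀ i : Fin d, ∫ y, (f y : ℝ) ∂(κ i) = ∫ x, u i x * (f (τ i x) : ℝ) ∂ν :=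
        fun i => hκint i _ hcont.measurable
      rw [Finset.sum_congr rfl fun i _ => e2 i]
      have hint2 : ∀ i ∈ Finset.univ,
          Integrable (fun x => u i x * (f (τ i x) : ℝ)) ν := by
        intro i _
        refine integrable_of_bdd ((hum i).mul (hcont.measurable.comp (hτ i).measurable))
          (M := ((nndist f 0 : ℝ≥0) : ℝ)) (fun x => ?_)
        rw [abs_mul]
        calc |u i x| * |(f (τ i x) : ℝ)| ≤ 1 * ((nndist f 0 : ℝ≥0) : ℝ) := by
              apply mul_le_mul
              · rw [abs_of_pos (hupos i x)]; exact huub i x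
              · rw [abs_of_nonneg (f (τ i x)).coe_nonneg]
                exact_mod_cast BoundedContinuousFunction.NNReal.upper_bound f (τ i x)
              · exact abs_nonneg _
              · exact zero_le_one
          _ = _ := one_mul _
      rw [← integral_finset_sum _ (fun i _ => hint2 i (Finset.mem_univ i))]
      exact hproj ⟨fun x => (f x : ℝ), hcont⟩
    have h1 := BoundedContinuousFunction.toReal_lintegral_coe_eq_integral f (∑ i, κ i)
    have h2 := BoundedContinuousFunction.toReal_lintegral_coe_eq_integral f ν
    have fin1 := BoundedContinuousFunction.lintegral_lt_top_of_nnreal (∑ i, κ i) f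
    have fin2 := BoundedContinuousFunction.lintegral_lt_top_of_nnreal ν f
    exact (ENNReal.toReal_eq_toReal_iff' fin1.ne fin2.ne).mp (by rw [h1, h2, hB])
  -- invariance under bounded measurable functions
  have key : ∀ (g : unitInterval → ℝ) (M : ℝ), Measurable g → (∀ x, |g x| ≤ M) →
      ∫ x, (∑ i, u i x * g (τ i x)) ∂ν = ∫ x, g x ∂ν := by
    intro g M hg hb
    have hint2 : ∀ i : Fin d, Integrable (fun x => u i x * g (τ i x)) ν := by
      intro i
      refine integrable_of_bdd ((hum i).mul (hg.comp (hτ i).measurable)) (M := max M 0)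
        (fun x => ?_)
      rw [abs_mul]
      calc |u i x| * |g (τ i x)| ≤ 1 * max M 0 := by
            apply mul_le_mul
            · rw [abs_of_pos (hupos i x)]; exact huub i x
            · exact le_trans (hb _) (le_max_left _ _)
            · exact abs_nonneg _
            · norm_num
        _ = max M 0 := one_mul _
    rw [integral_finset_sum _ (fun i _ => hint2 i)]
    have e3 : ∀ i : Fin d, ∫ x, u i x * g (τ i x) ∂ν = ∫ y, g y ∂(κ i) :=
      fun i => (hκint i g hg).symm
    rw [Finset.sum_congr rfl fun i _ => e3 i]
    have hint3 : ∀ i ∈ Finset.univ, Integrable g (κ i) := by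
      intro i _
      have := hκfin i
      exact integrable_of_bdd hg hb
    rw [← integral_finset_sum_measure hint3, hmeq]
  -- bound for log φ
  set Mφ : ℝ := max |Real.log cφ| |Real.log Cφ| with hMφdef
  have hφlog : ∀ x, |Real.log (φ x)| ≤ Mφ := fun x => abs_log_le hcφ (hφlb x) (hφub x)
  set Mh : ℝ := max |Real.log ch| |Real.log Ch| with hMhdef
  have hhlog : ∀ x, |Real.log (h x)| ≤ Mh := fun x => abs_log_le hch (hhlb x) (hhub x)
  have hφint : Integrable (fun x => Real.log (φ x)) ν :=
    integrable_of_bdd (Real.measurable_log.comp hφm) hφlog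
  -- transfer of integrals from nuhat₀ to ν
  have htrans : ∀ (g : unitInterval → ℝ), Measurable g →
      ∫ p, g p.1 ∂nuhat₀ = ∫ x, g x ∂ν := by
    intro g hg
    rw [hνdef, integral_map measurable_fst.aemeasurable hg.aestronglyMeasurable]
  have hφtrans : ∫ p, Real.log (φ p.1) ∂nuhat₀ = ∫ x, Real.log (φ x) ∂ν :=
    htrans _ (Real.measurable_log.comp hφm)
  -- the target value
  set E : ℝ := Real.log ρ - ∫ x, Real.log (φ x) ∂ν with hEdef
  -- Membership: the witness f₀ = φ * h
  set f₀ : unitInterval → ℝ := fun x => φ x * h x with hf₀def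
  have hf₀B : MemBplus f₀ := by
    refine ⟨hφm.mul hhm, cφ * ch, Cφ * Ch, mul_pos hcφ hch, fun x => ?_, fun x => ?_⟩
    · exact mul_le_mul (hφlb x) (hhlb x) hch.le (le_trans hcφ.le (hφlb x))
    · exact mul_le_mul (hφub x) (hhub x) (hhpos x).le (le_trans (hφpos x).le (hφub x))
  have hmem : E = ∫ p, Real.log ((∑ i : Fin d, f₀ (τ i p.1)) / f₀ p.1) ∂nuhat₀ := by
    have hpt : ∀ x, Real.log ((∑ i : Fin d, f₀ (τ i x)) / f₀ x)
        = Real.log ρ - Real.log (φ x) := by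
      intro x
      have : (∑ i : Fin d, f₀ (τ i x)) = ρ * h x := heig x
      rw [this, hf₀def]
      rw [Real.log_div (hρh x).ne' (mul_pos (hφpos x) (hhpos x)).ne',
        Real.log_mul hρ.ne' (hhpos x).ne', Real.log_mul (hφpos x).ne' (hhpos x).ne']
      ring
    calc E = ∫ p, (Real.log ρ - Real.log (φ p.1)) ∂nuhat₀ := by
          rw [integral_sub (integrable_const _)
            (integrable_of_bdd (M := Mφ)
              (show Measurable fun p : unitInterval × (ℕ → Fin d) => Real.log (φ p.1) from
                (Real.measurable_log.comp hφm).comp measurable_fst) (fun p => hφlog p.1))]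
          rw [integral_const]
          simp [hEdef, hφtrans]
      _ = _ := by
          congr 1
          funext p
          rw [hpt p.1]
  -- Lower bound
  have hlb : ∀ r ∈ {r : ℝ | ∃ f : unitInterval → ℝ, MemBplus f ∧
      r = ∫ p, Real.log ((∑ i : Fin d, f (τ i p.1)) / f p.1) ∂nuhat₀}, E ≤ r := by
    rintro r ⟨f, ⟨hfm, cf, Cf, hcf, hflb, hfub⟩, hr⟩
    have hfpos : ∀ x, 0 < f x := fun x => lt_of_lt_of_le hcf (hflb x)
    set Mf : ℝ := max |Real.log cf| |Real.log Cf| with hMfdef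
    have hflog : ∀ x, |Real.log (f x)| ≤ Mf := fun x => abs_log_le hcf (hflb x) (hfub x)
    -- the function G
    set G : unitInterval → ℝ := fun x => Real.log ((∑ i : Fin d, f (τ i x)) / f x) with hGdef
    have hGm : Measurable G := Real.measurable_log.comp
      ((Finset.measurable_sum _ (fun i _ => hfm.comp (hτ i).measurable)).div hfm)
    have hsumpos : ∀ x, 0 < ∑ i : Fin d, f (τ i x) := by
      intro x
      apply Finset.sum_pos (fun i _ => hfpos _)
      rw [← Finset.card_pos]
      simpa using (show 0 < d from hd)
    have hGsplit : ∀ x, G x = Real.log (∑ i : Fin d, f (τ i x)) - Real.log (f x) :=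
      fun x => Real.log_div (hsumpos x).ne' (hfpos x).ne'
    have hGlb : ∀ x, ∀ i : Fin d, cf ≤ ∑ j : Fin d, f (τ j x) := by
      intro x i
      calc cf ≤ f (τ i x) := hflb _
        _ ≤ ∑ j : Fin d, f (τ j x) :=
            Finset.single_le_sum (f := fun j => f (τ j x)) (fun j _ => (hfpos _).le)
              (Finset.mem_univ i)
    have hGub : ∀ x, ∑ j : Fin d, f (τ j x) ≤ d * Cf := by
      intro x
      calc ∑ j : Fin d, f (τ j x) ≤ ∑ _j : Fin d, Cf :=
            Finset.sum_le_sum (fun j _ => hfub _)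
        _ = d * Cf := by simp [mul_comm]
    have hGbd : ∀ x, |G x| ≤ max |Real.log cf| |Real.log (d * Cf)| + Mf := by
      intro x
      rw [hGsplit x]
      calc |Real.log (∑ i : Fin d, f (τ i x)) - Real.log (f x)|
          ≤ |Real.log (∑ i : Fin d, f (τ i x))| + |Real.log (f x)| := abs_sub _ _
        _ ≤ max |Real.log cf| |Real.log (d * Cf)| + Mf := by
            have i0 : Fin d := ⟨0, hd⟩
            exact add_le_add (abs_log_le hcf (hGlb x i0) (hGub x)) (hflog x)
    have hGint : Integrable G ν := integrable_of_bdd hGm hGbd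
    have hrν : r = ∫ x, G x ∂ν := by rw [hr]; exact htrans G hGm
    -- the function g
    set g : unitInterval → ℝ :=
      fun y => Real.log (f y) - Real.log (h y) - Real.log (φ y) with hgdef
    have hgm : Measurable g :=
      ((Real.measurable_log.comp hfm).sub (Real.measurable_log.comp hhm)).sub
        (Real.measurable_log.comp hφm)
    have hgbd : ∀ y, |g y| ≤ Mf + Mh + Mφ := by
      intro y
      calc |g y| ≤ |Real.log (f y) - Real.log (h y)| + |Real.log (φ y)| := abs_sub _ _
        _ ≤ (|Real.log (f y)| + |Real.log (h y)|) + |Real.log (φ y)| :=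
            add_le_add (abs_sub _ _) le_rfl
        _ ≤ Mf + Mh + Mφ := by
            have := hflog y; have := hhlog y; have := hφlog y
            push_cast
            linarith [hflog y, hhlog y, hφlog y]
    -- pointwise lower bound
    set L : unitInterval → ℝ := fun x =>
      (∑ i : Fin d, u i x * g (τ i x)) - (Real.log (f x) - Real.log (h x)) + Real.log ρ
      with hLdef
    have hLm : Measurable L := by
      apply Measurable.add _ measurable_const
      exact (Finset.measurable_sum _
        (fun i _ => (hum i).mul (hgm.comp (hτ i).measurable))).sub
        ((Real.measurable_log.comp hfm).sub (Real.measurable_log.comp hhm))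
    have hLbd : ∀ x, |L x| ≤ d * (Mf + Mh + Mφ) + (Mf + Mh) + |Real.log ρ| := by
      intro x
      have h1 : |∑ i : Fin d, u i x * g (τ i x)| ≤ d * (Mf + Mh + Mφ) := by
        calc |∑ i : Fin d, u i x * g (τ i x)| ≤ ∑ i : Fin d, |u i x * g (τ i x)| :=
              Finset.abs_sum_le_sum_abs _ _
          _ ≤ ∑ _i : Fin d, (Mf + Mh + Mφ) := by
              apply Finset.sum_le_sum
              intro i _
              rw [abs_mul]
              calc |u i x| * |g (τ i x)| ≤ 1 * (Mf + Mh + Mφ) := by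
                    apply mul_le_mul
                    · rw [abs_of_pos (hupos i x)]; exact huub i x
                    · exact hgbd _
                    · exact abs_nonneg _
                    · have := abs_nonneg (g (τ i x)); linarith [hgbd (τ i x)]
                _ = Mf + Mh + Mφ := one_mul _
          _ = d * (Mf + Mh + Mφ) := by
              rw [Finset.sum_const, Finset.card_univ, Fintype.card_fin, nsmul_eq_mul]
      have h2 : |Real.log (f x) - Real.log (h x)| ≤ Mf + Mh := by
        calc |Real.log (f x) - Real.log (h x)| ≤ |Real.log (f x)| + |Real.log (h x)| :=
              abs_sub _ _
          _ ≤ Mf + Mh := add_le_add (hflog x) (hhlog x)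
      calc |L x| ≤ |(∑ i : Fin d, u i x * g (τ i x)) - (Real.log (f x) - Real.log (h x))|
            + |Real.log ρ| := abs_add_le _ _
        _ ≤ (|∑ i : Fin d, u i x * g (τ i x)| + |Real.log (f x) - Real.log (h x)|)
            + |Real.log ρ| := add_le_add (abs_sub _ _) le_rfl
        _ ≤ d * (Mf + Mh + Mφ) + (Mf + Mh) + |Real.log ρ| := by linarith
    have hLint : Integrable L ν := integrable_of_bdd hLm hLbd
    have hLle : ∀ x, L x ≤ G x := by
      intro x
      have hgibbs := gibbs (fun i => u i x) (fun i => f (τ i x))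
        (fun i => hupos i x) (husum x) (fun i => hfpos _)
      have hterm : ∀ i : Fin d, u i x * Real.log (f (τ i x) / u i x)
          = u i x * (g (τ i x) + Real.log ρ + Real.log (h x)) := by
        intro i
        congr 1
        rw [Real.log_div (hfpos _).ne' (hupos i x).ne', hu i x,
          Real.log_div (mul_pos (hφpos _) (hhpos _)).ne' (hρh x).ne',
          Real.log_mul (hφpos _).ne' (hhpos _).ne',
          Real.log_mul hρ.ne' (hhpos x).ne', hgdef]
        ring
      have hsum2 : ∑ i : Fin d, u i x * Real.log (f (τ i x) / u i x)
          = (∑ i : Fin d, u i x * g (τ i x)) + (Real.log ρ + Real.log (h x)) := by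
        rw [Finset.sum_congr rfl (fun i _ => hterm i)]
        have : ∀ i : Fin d, u i x * (g (τ i x) + Real.log ρ + Real.log (h x))
            = u i x * g (τ i x) + u i x * (Real.log ρ + Real.log (h x)) := by
          intro i; ring
        rw [Finset.sum_congr rfl (fun i _ => this i), Finset.sum_add_distrib,
          ← Finset.sum_mul, husum x, one_mul]
      rw [hGsplit x, hLdef]
      rw [hsum2] at hgibbs
      simp only
      linarith
    have hIntLG : ∫ x, L x ∂ν ≤ ∫ x, G x ∂ν := integral_mono hLint hGint hLle
    -- compute ∫ L
    have hgsub : Integrable (fun x => Real.log (f x) - Real.log (h x)) ν :=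
      integrable_of_bdd ((Real.measurable_log.comp hfm).sub (Real.measurable_log.comp hhm))
        (M := Mf + Mh) (fun x => by
          calc |Real.log (f x) - Real.log (h x)| ≤ |Real.log (f x)| + |Real.log (h x)| :=
              abs_sub _ _
            _ ≤ Mf + Mh := add_le_add (hflog x) (hhlog x))
    have hsumint : Integrable (fun x => ∑ i : Fin d, u i x * g (τ i x)) ν := by
      apply integrable_finset_sum
      intro i _
      refine integrable_of_bdd ((hum i).mul (hgm.comp (hτ i).measurable))
        (M := Mf + Mh + Mφ) (fun x => ?_)
      rw [abs_mul]
      calc |u i x| * |g (τ i x)| ≤ 1 * (Mf + Mh + Mφ) := by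
            apply mul_le_mul
            · rw [abs_of_pos (hupos i x)]; exact huub i x
            · exact hgbd _
            · exact abs_nonneg _
            · have := abs_nonneg (g (τ i x)); linarith [hgbd (τ i x)]
        _ = Mf + Mh + Mφ := one_mul _
    have hIntL : ∫ x, L x ∂ν = E := by
      have h4 : Integrable (fun x =>
          (∑ i : Fin d, u i x * g (τ i x)) - (Real.log (f x) - Real.log (h x))) ν :=
        hsumint.sub hgsub
      have e5 : ∫ x, L x ∂ν
          = (∫ x, ((∑ i : Fin d, u i x * g (τ i x)) - (Real.log (f x) - Real.log (h x))) ∂ν)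
            + ∫ _x, Real.log ρ ∂ν := integral_add h4 (integrable_const _)
      have e6 : ∫ x, ((∑ i : Fin d, u i x * g (τ i x)) - (Real.log (f x) - Real.log (h x))) ∂ν
          = (∫ x, (∑ i : Fin d, u i x * g (τ i x)) ∂ν)
            - ∫ x, (Real.log (f x) - Real.log (h x)) ∂ν := integral_sub hsumint hgsub
      have e7 : ∫ x, (∑ i : Fin d, u i x * g (τ i x)) ∂ν = ∫ x, g x ∂ν :=
        key g (Mf + Mh + Mφ) hgm hgbd
      have e8 : ∫ x, g x ∂ν
          = (∫ x, (Real.log (f x) - Real.log (h x)) ∂ν) - ∫ x, Real.log (φ x) ∂ν :=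
        integral_sub hgsub hφint
      rw [e5, e6, e7, e8, integral_const]
      simp only [measure_univ, probReal_univ, ENNReal.toReal_one, one_smul, smul_eq_mul, one_mul, hEdef]
      ring
    rw [hrν]
    rw [← hIntL]
    exact hIntLG
  -- conclude
  have hE : entropy τ nuhat₀ = E := by
    rw [entropy]
    apply le_antisymm
    · exact csInf_le ⟨E, hlb⟩ ⟨f₀, hf₀B, hmem⟩
    · exact le_csInf ⟨E, f₀, hf₀B, hmem⟩ hlb
  rw [hE, hEdef, hφtrans]
  ring
end
end

section
/- Consider the IFS on $[0,1]$ with $d=2$ maps $\tau_0(x)=x$ and $\tau_1(x)=1-x$, and the potential $\phi(x)=2+\cos(2\pi x)$. Let $\bar{w}\in\Sigma=\{0,1\}^{\mathbb{N}}$ be any sequence different from the constant sequence $(1,1,1,\dots)$, and let $\hat{\nu}_0=\frac{1}{2}\big(\delta_{(0,\,11\bar{w})}+\delta_{(1,\,1\bar{w})}\big)$. Then: (i) $\sup\{\int\ln\phi\,d\hat{\nu}:\hat{\nu}\text{ holonomic}\}=\ln 3$, attained at $\hat{\nu}_0$; (ii) $p(\phi)=\ln 6$; and (iii) $\hat{\nu}_0$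 is an equilibrium state for $\phi$, i.e. $h(\hat{\nu}_0)+\int\ln\phi\,d\hat{\nu}_0=p(\phi)=\ln 6$. -/
open MeasureTheory

noncomputable section

/-- Prepend a symbol to a sequence. -/
def prepend (a : Fin 2) (w : ℕ → Fin 2) : ℕ → Fin 2 :=
  fun n => Nat.casesOn n a w

/-- The IFS `τ₀(x) = x`, `τ₁(x) = 1 - x` on `[0,1]`. -/
def tauEx : Fin 2 → unitInterval → unitInterval :=
  ![fun x => x, unitInterval.symm]

/-- The potential `φ(x) = 2 + cos(2πx)`. -/
def phiEx : unitInterval → ℝ :=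
  fun x => 2 + Real.cos (2 * Real.pi * (x : ℝ))

/-- The holonomic probability `ν̂₀ = (δ_{(0,11w̄)} + δ_{(1,1w̄)})/2`. -/
def nuhatEx (wbar : ℕ → Fin 2) : Measure (unitInterval × (ℕ → Fin 2)) :=
  (2 : ENNReal)⁻¹ •
    (Measure.dirac ((0 : unitInterval), prepend 1 (prepend 1 wbar))
      + Measure.dirac ((1 : unitInterval), prepend 1 wbar))

/- ### Auxiliary lemmas -/

lemma aux_integrable_dirac {α : Type*} [MeasurableSpace α] (f : α → ℝ) (a : α)
    (hf : StronglyMeasurable f) : Integrable f (Measure.dirac a) := by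
  refine ⟨hf.aestronglyMeasurable, ?_⟩
  rw [HasFiniteIntegral, lintegral_dirac' a (by measurability)]
  exact ENNReal.coe_lt_top

lemma aux_integral_nuhatEx (wbar : ℕ → Fin 2) (g : unitInterval × (ℕ → Fin 2) → ℝ)
    (hg : StronglyMeasurable g) :
    ∫ p, g p ∂(nuhatEx wbar)
      = (g (0, prepend 1 (prepend 1 wbar)) + g (1, prepend 1 wbar)) / 2 := by
  rw [nuhatEx, integral_smul_measure,
    integral_add_measure (aux_integrable_dirac g _ hg) (aux_integrable_dirac g _ hg),
    integral_dirac' g _ hg, integral_dirac' g _ hg]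
  simp [ENNReal.toReal_inv]
  ring

lemma aux_prob (wbar : ℕ → Fin 2) : IsProbabilityMeasure (nuhatEx wbar) := by
  constructor
  simp [nuhatEx]
  exact ENNReal.inv_two_add_inv_two

lemma aux_cont_tau (i : Fin 2) : Continuous (tauEx i) := by
  fin_cases i
  · exact continuous_id
  · exact unitInterval.continuous_symm

lemma aux_meas_T : Measurable (fun p : unitInterval × (ℕ → Fin 2) => tauEx (p.2 0) p.1) := by
  have h : Measurable (fun q : unitInterval × Fin 2 => tauEx q.2 q.1) :=
    measurable_from_prod_countable_left (fun i => (aux_cont_tau i).measurable)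
  exact h.comp (measurable_fst.prodMk ((measurable_pi_apply 0).comp measurable_snd))

lemma aux_holonomic (wbar : ℕ → Fin 2) : IsHolonomic tauEx (nuhatEx wbar) := by
  intro f
  rw [aux_integral_nuhatEx wbar (fun p => f (tauEx (p.2 0) p.1))
      ((f.continuous.measurable.comp aux_meas_T).stronglyMeasurable),
    aux_integral_nuhatEx wbar (fun p => f p.1)
      ((f.continuous.measurable.comp measurable_fst).stronglyMeasurable)]
  have h0 : prepend 1 (prepend 1 wbar) 0 = 1 := rfl
  have h1 : prepend 1 wbar 0 = 1 := rfl
  simp only [h0, h1]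
  have t0 : tauEx 1 (0 : unitInterval) = 1 := by simp [tauEx]
  have t1 : tauEx 1 (1 : unitInterval) = 0 := by simp [tauEx]
  rw [t0, t1]
  ring

lemma aux_cont_logphi : Continuous (fun x : unitInterval => Real.log (phiEx x)) := by
  have hc : Continuous phiEx := by
    apply Continuous.add continuous_const
    exact Real.continuous_cos.comp (by continuity)
  apply hc.log
  intro x
  have := Real.neg_one_le_cos (2 * Real.pi * (x : ℝ))
  simp only [phiEx]
  intro h
  linarith [h]

lemma aux_phi_zero : phiEx 0 = 3 := by simp [phiEx]; norm_num

lemma aux_phi_one : phiEx 1 = 3 := by simp [phiEx, Real.cos_two_pi]; norm_num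

lemma aux_logphi_le (x : unitInterval) : Real.log (phiEx x) ≤ Real.log 3 := by
  apply Real.log_le_log
  · have := Real.neg_one_le_cos (2 * Real.pi * (x : ℝ)); simp only [phiEx]; linarith
  · have := Real.cos_le_one (2 * Real.pi * (x : ℝ)); simp only [phiEx]; linarith

lemma aux_int_logphi (wbar : ℕ → Fin 2) :
    (∫ p, Real.log (phiEx p.1) ∂(nuhatEx wbar)) = Real.log 3 := by
  rw [aux_integral_nuhatEx wbar (fun p => Real.log (phiEx p.1))
    ((aux_cont_logphi.comp continuous_fst).stronglyMeasurable)]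
  simp only [aux_phi_zero, aux_phi_one]
  ring

lemma aux_int_logphi_le (ν : Measure (unitInterval × (ℕ → Fin 2)))
    [IsProbabilityMeasure ν] :
    (∫ p, Real.log (phiEx p.1) ∂ν) ≤ Real.log 3 := by
  have hcont : Continuous (fun p : unitInterval × (ℕ → Fin 2) => Real.log (phiEx p.1)) :=
    aux_cont_logphi.comp continuous_fst
  have hint : Integrable (fun p : unitInterval × (ℕ → Fin 2) => Real.log (phiEx p.1)) ν :=
    hcont.integrable_of_hasCompactSupport (HasCompactSupport.of_compactSpace _)
  calc (∫ p, Real.log (phiEx p.1) ∂ν) ≤ ∫ _, Real.log 3 ∂ν :=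
        integral_mono hint (integrable_const _) (fun p => aux_logphi_le p.1)
    _ = Real.log 3 := by simp

/-- AM–GM in log form. -/
lemma aux_amgm (a b : ℝ) (ha : 0 < a) (hb : 0 < b) :
    Real.log 2 ≤ (Real.log ((a + b) / a) + Real.log ((a + b) / b)) / 2 := by
  have hab : 0 < a + b := by linarith
  rw [← Real.log_mul (by positivity) (by positivity)]
  have h4 : (4 : ℝ) ≤ (a + b) / a * ((a + b) / b) := by
    rw [div_mul_div_comm, le_div_iff₀ (by positivity)]
    nlinarith [sq_nonneg (a - b)]
  have h44 := Real.log_le_log (by norm_num) h4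
  have h42 : Real.log 4 = 2 * Real.log 2 := by
    rw [show (4 : ℝ) = 2 ^ 2 by norm_num, Real.log_pow]; push_cast; ring
  linarith

/-- The entropy integrand for `f ∈ 𝔹⁺` is strongly measurable. -/
lemma aux_meas_integrand (f : unitInterval → ℝ) (hf : Measurable f) :
    StronglyMeasurable (fun p : unitInterval × (ℕ → Fin 2) =>
      Real.log ((∑ i : Fin 2, f (tauEx i p.1)) / f p.1)) := by
  apply Measurable.stronglyMeasurable
  apply Measurable.log
  apply Measurable.div
  · apply Finset.measurable_sum
    intro i _
    exact (hf.comp (aux_cont_tau i).measurable).comp measurable_fst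
  · exact hf.comp measurable_fst

lemma aux_entropy_le (ν : Measure (unitInterval × (ℕ → Fin 2)))
    [IsProbabilityMeasure ν] : entropy tauEx ν ≤ Real.log 2 := by
  have hmem : Real.log 2 ∈ {r : ℝ | ∃ f : unitInterval → ℝ, MemBplus f ∧
      r = ∫ p, Real.log ((∑ i : Fin 2, f (tauEx i p.1)) / f p.1) ∂ν} := by
    refine ⟨fun _ => 1, ⟨measurable_const, 1, 1, one_pos, fun _ => le_refl 1, fun _ => le_refl 1⟩, ?_⟩
    simp only [Fin.sum_univ_two]
    norm_num
  by_cases hb : BddBelow {r : ℝ | ∃ f : unitInterval → ℝ, MemBplus f ∧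
      r = ∫ p, Real.log ((∑ i : Fin 2, f (tauEx i p.1)) / f p.1) ∂ν}
  · exact csInf_le hb hmem
  · rw [entropy, Real.sInf_of_not_bddBelow hb]
    exact Real.log_nonneg one_le_two

lemma aux_entropy_eq (wbar : ℕ → Fin 2) : entropy tauEx (nuhatEx wbar) = Real.log 2 := by
  have key : ∀ r ∈ {r : ℝ | ∃ f : unitInterval → ℝ, MemBplus f ∧
      r = ∫ p, Real.log ((∑ i : Fin 2, f (tauEx i p.1)) / f p.1) ∂(nuhatEx wbar)},
      Real.log 2 ≤ r := by
    rintro r ⟨f, ⟨hfm, c, C, hc, hcf, hfC⟩, rfl⟩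
    rw [aux_integral_nuhatEx wbar _ (aux_meas_integrand f hfm)]
    have t00 : tauEx 0 (0 : unitInterval) = 0 := by simp [tauEx]
    have t01 : tauEx 1 (0 : unitInterval) = 1 := by simp [tauEx]
    have t10 : tauEx 0 (1 : unitInterval) = 1 := by simp [tauEx]
    have t11 : tauEx 1 (1 : unitInterval) = 0 := by simp [tauEx]
    simp only [Fin.sum_univ_two, t00, t01, t10, t11]
    have ha : 0 < f 0 := lt_of_lt_of_le hc (hcf 0)
    have hb : 0 < f 1 := lt_of_lt_of_le hc (hcf 1)
    have := aux_amgm (f 0) (f 1) ha hb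
    have hcomm : f 1 + f 0 = f 0 + f 1 := by ring
    rw [hcomm]
    linarith
  haveI := aux_prob wbar
  refine le_antisymm (aux_entropy_le _) ?_
  apply le_csInf
  · exact ⟨Real.log 2, (fun _ => 1), ⟨measurable_const, 1, 1, one_pos,
      fun _ => le_refl 1, fun _ => le_refl 1⟩, by simp only [Fin.sum_univ_two]; norm_num⟩
  · exact key

theorem stmt16 (wbar : ℕ → Fin 2) (hwbar : wbar ≠ fun _ => 1) :
    (sSup {r : ℝ | ∃ nuhat : Measure (unitInterval × (ℕ → Fin 2)),
        IsProbabilityMeasure nuhat ∧ IsHolonomic tauEx nuhat ∧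
        r = ∫ p, Real.log (phiEx p.1) ∂nuhat}
      = Real.log 3
      ∧ (∫ p, Real.log (phiEx p.1) ∂(nuhatEx wbar)) = Real.log 3) ∧
    pressure tauEx phiEx = Real.log 6 ∧
    entropy tauEx (nuhatEx wbar) + (∫ p, Real.log (phiEx p.1) ∂(nuhatEx wbar))
      = Real.log 6 := by
  haveI := aux_prob wbar
  have hint := aux_int_logphi wbar
  have hent := aux_entropy_eq wbar
  have h23 : Real.log 2 + Real.log 3 = Real.log 6 := by
    rw [← Real.log_mul (by norm_num) (by norm_num)]; norm_num
  refine ⟨⟨?_, hint⟩, ?_, by rw [hent, hint, h23]⟩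
  · apply le_antisymm
    · apply csSup_le
      · exact ⟨Real.log 3, nuhatEx wbar, aux_prob wbar, aux_holonomic wbar, hint.symm⟩
      · rintro r ⟨ν, hp, _, rfl⟩
        haveI := hp
        exact aux_int_logphi_le ν
    · apply le_csSup
      · refine ⟨Real.log 3, ?_⟩
        rintro r ⟨ν, hp, _, rfl⟩
        haveI := hp
        exact aux_int_logphi_le ν
      · exact ⟨nuhatEx wbar, aux_prob wbar, aux_holonomic wbar, hint.symm⟩
  · apply le_antisymm
    · apply csSup_le
      · exact ⟨Real.log 6, nuhatEx wbar, aux_prob wbar, aux_holonomic wbar,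
          by rw [hent, hint, h23]⟩
      · rintro r ⟨ν, hp, _, rfl⟩
        haveI := hp
        have h1 : entropy tauEx ν ≤ Real.log 2 := aux_entropy_le ν
        have h2 : (∫ p, Real.log (phiEx p.1) ∂ν) ≤ Real.log 3 := aux_int_logphi_le ν
        linarith
    · apply le_csSup
      · refine ⟨Real.log 6, ?_⟩
        rintro r ⟨ν, hp, _, rfl⟩
        haveI := hp
        have h1 : entropy tauEx ν ≤ Real.log 2 := aux_entropy_le ν
        have h2 : (∫ p, Real.log (phiEx p.1) ∂ν) ≤ Real.log 3 := aux_int_logphi_le ν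
        linarith
      · exact ⟨nuhatEx wbar, aux_prob wbar, aux_holonomic wbar, by rw [hent, hint, h23]⟩
end
end
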